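/- The algebra P_n is right-symmetric: (xy)z - x(yz) = (xz)y - x(zy) for all x,y,z in P_n. -/

import Mathlib

inductive PBasis (n : ℕ) : Type
  | a : Fin n → Fin n → PBasis n
  | b : Fin n → Fin n → PBasis n
  | c : Fin n → PBasis n
  | d : Fin n → Fin n → PBasis n
  | e : Fin n → Fin n → PBasis n
  deriving DecidableEq

abbrev Pn (F : Type*) [Field F] (n : ℕ) : Type _ := PBasis n →₀ F

open PBasis in
noncomputable def mulB (F : Type*) [Field F] {n : ℕ} : PBasis n → PBasis n → Pn F n
  | a i j, c k => if k = i then Finsupp.single (d i j) 1 else 0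
  | b i j, c k => if k = i then Finsupp.single (e i j) 1 else 0
  | a i j, e k l => if i = k ∧ j = l then Finsupp.single (c j) 1 else 0
  | e k l, a i j => if i = k ∧ j = l then Finsupp.single (c j) 1 else 0
  | b i j, d k l => if i = k ∧ j = l then -Finsupp.single (c j) 1 else 0
  | d k l, b i j => if i = k ∧ j = l then -Finsupp.single (c j) 1 else 0
  | _, _ => 0

noncomputable def mulLin (F : Type*) [Field F] {n : ℕ} :
    Pn F n →ₗ[F] Pn F n →ₗ[F] Pn F n :=
  Finsupp.lift (Pn F n →ₗ[F] Pn F n) F (PBasis n)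
    (fun u => Finsupp.lift (Pn F n) F (PBasis n) (fun v => mulB F u v))

noncomputable instance (F : Type*) [Field F] (n : ℕ) : Mul (Pn F n) :=
  ⟨fun x y => mulLin F x y⟩

section lemmas
variable (F : Type*) [Field F] {n : ℕ}

lemma mul_def (x y : Pn F n) : x * y = mulLin F x y := rfl

lemma single_mul_single (u v : PBasis n) :
    (Finsupp.single u (1:F)) * Finsupp.single v 1 = mulB F u v := by
  simp [mul_def, mulLin, Finsupp.lift_apply, Finsupp.sum_single_index]

lemma zero_mul' (x : Pn F n) : (0 : Pn F n) * x = 0 := by simp [mul_def]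
lemma mul_zero' (x : Pn F n) : x * (0 : Pn F n) = 0 := by simp [mul_def]
lemma add_mul' (x y z : Pn F n) : (x + y) * z = x * z + y * z := by simp [mul_def]
lemma mul_add' (x y z : Pn F n) : x * (y + z) = x * y + x * z := by simp [mul_def]
lemma sMulMul (r : F) (x y : Pn F n) : (r • x) * y = r • (x * y) := by simp [mul_def]
lemma mulSMul (r : F) (x y : Pn F n) : x * (r • y) = r • (x * y) := by simp [mul_def]
lemma neg_mul' (x y : Pn F n) : (-x) * y = -(x * y) := by simp [mul_def]
lemma mul_neg' (x y : Pn F n) : x * (-y) = -(x * y) := by simp [mul_def]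

open PBasis in
lemma core (u v w : PBasis n) :
    (mulB F u v) * Finsupp.single w 1 - Finsupp.single u 1 * (mulB F v w)
      = (mulB F u w) * Finsupp.single v 1 - Finsupp.single u 1 * (mulB F w v) := by
  rcases u with ⟨i,j⟩|⟨i,j⟩|i|⟨i,j⟩|⟨i,j⟩ <;>
    rcases v with ⟨k,l⟩|⟨k,l⟩|k|⟨k,l⟩|⟨k,l⟩ <;>
    rcases w with ⟨p,q⟩|⟨p,q⟩|p|⟨p,q⟩|⟨p,q⟩ <;>
    simp only [mulB, zero_mul' , mul_zero', neg_mul', mul_neg'] <;>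
    split_ifs <;>
    (try simp_all [single_mul_single, mulB, neg_mul', mul_neg', zero_mul', mul_zero']) <;>
    (try split_ifs) <;>
    simp_all [eq_comm]

end lemmas

theorem stmt (F : Type*) [Field F] (n : ℕ) :
    ∀ x y z : Pn F n,
      (x * y) * z - x * (y * z) = (x * z) * y - x * (z * y) := by
  intro x y z
  induction x using Finsupp.induction_linear with
  | zero => simp [zero_mul', mul_zero']
  | add a b ha hb =>
      simp only [add_mul', mul_add'] at *
      rw [sub_eq_sub_iff_add_eq_add] at *
      linear_combination (norm := module) ha + hb
  | single u r =>
  induction y using Finsupp.induction_linear with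
  | zero => simp [zero_mul', mul_zero']
  | add a b ha hb =>
      simp only [add_mul', mul_add'] at *
      rw [sub_eq_sub_iff_add_eq_add] at *
      linear_combination (norm := module) ha + hb
  | single v s =>
  induction z using Finsupp.induction_linear with
  | zero => simp [zero_mul', mul_zero']
  | add a b ha hb =>
      simp only [add_mul', mul_add'] at *
      rw [sub_eq_sub_iff_add_eq_add] at *
      linear_combination (norm := module) ha + hb
  | single w t =>
      rw [show (Finsupp.single u r : Pn F n) = r • Finsupp.single u 1 by simp,
          show (Finsupp.single v s : Pn F n) = s • Finsupp.single v 1 by simp,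
          show (Finsupp.single w t : Pn F n) = t • Finsupp.single w 1 by simp]
      simp only [sMulMul, mulSMul, single_mul_single, smul_smul]
      rw [show t*(s*r) = t*s*r by ring, show s*(t*r) = s*t*r by ring,
          show (t*s*r : F) = (s*t*r : F) by ring, ← smul_sub, ← smul_sub,
          core F u v w]
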